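/- Let (M, 𝒜, μ) be a finite measure space, X = L²(μ) the real Hilbert space with inner product ⟪f,g⟫ = ∫ f·g dμ, and J : X → ℝ absolutely one-homogeneous and translation invariant. Suppose C ⊆ M is measurable with μ(C) > 0 and μ(M \ C) > 0, and C is an eigenset of J with eigenvalue λ and ratio β = μ(C)/μ(M \ C). Then λ·μ(C) = J(χ_C). (Claim: for an eigenset, the eigenvalue times the area equals the total variation of the indicator, i.e. λ|C| = NETV(C).) -/

import Mathlib

open MeasureTheory RealInnerProductSpace

/-- `p` is a subgradient of `J` at `u`. -/
def IsSubgradientAt {X : Type*} [NormedAddCommGroup X] [InnerProductSpace ℝ X]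
    (J : X → ℝ) (p u : X) : Prop :=
  ∀ v : X, J v ≥ J u + ⟪p, v - u⟫

/-- The indicator function of a measurable set as an element of `L²(μ)`. -/
noncomputable def chi {M : Type*} [MeasurableSpace M] (μ : Measure M) [IsFiniteMeasure μ]
    {C : Set M} (hC : MeasurableSet C) : Lp ℝ 2 μ :=
  indicatorConstLp 2 hC (measure_ne_top μ C) (1 : ℝ)

/-- `C` is an eigenset of `J` with eigenvalue `lam` and ratio `β > 0`:
`ψ := χ_C − β • χ_{M \ C}` satisfies that `lam • ψ` is a subgradient of `J` at `ψ`. -/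
def IsEigenset {M : Type*} [MeasurableSpace M] (μ : Measure M) [IsFiniteMeasure μ]
    (J : Lp ℝ 2 μ → ℝ) {C : Set M} (hC : MeasurableSet C) (lam β : ℝ) : Prop :=
  0 < β ∧ IsSubgradientAt J
    (lam • (chi μ hC - β • chi μ hC.compl)) (chi μ hC - β • chi μ hC.compl)


lemma inner_chi_chi {M : Type*} [MeasurableSpace M] (μ : Measure M) [IsFiniteMeasure μ]
    {s t : Set M} (hs : MeasurableSet s) (ht : MeasurableSet t) :
    ⟪chi μ hs, chi μ ht⟫ = (μ (s ∩ t)).toReal := by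
  rw [chi, chi, MeasureTheory.L2.inner_indicatorConstLp_one hs (measure_ne_top μ s)]
  have h : ∫ x in s, (indicatorConstLp 2 ht (measure_ne_top μ t) (1:ℝ)) x ∂μ
      = ∫ x in s, t.indicator (fun _ => (1:ℝ)) x ∂μ :=
    setIntegral_congr_ae hs ((indicatorConstLp_coeFn).mono fun x hx _ => hx)
  rw [h, setIntegral_indicator ht, setIntegral_const, smul_eq_mul, mul_one, measureReal_def]

lemma chi_univ_eq {M : Type*} [MeasurableSpace M] (μ : Measure M) [IsFiniteMeasure μ]
    {C : Set M} (hC : MeasurableSet C) :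
    chi μ (MeasurableSet.univ : MeasurableSet (Set.univ : Set M)) = chi μ hC + chi μ hC.compl := by
  ext1
  filter_upwards [indicatorConstLp_coeFn (p := 2) (hs := (MeasurableSet.univ : MeasurableSet (Set.univ : Set M))) (hμs := measure_ne_top μ _) (c := (1:ℝ)),
    indicatorConstLp_coeFn (p := 2) (hs := hC) (hμs := measure_ne_top μ _) (c := (1:ℝ)),
    indicatorConstLp_coeFn (p := 2) (hs := hC.compl) (hμs := measure_ne_top μ _) (c := (1:ℝ)),
    Lp.coeFn_add (chi μ hC) (chi μ hC.compl)] with x h1 h2 h3 h4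
  simp only [chi] at h1 h2 h3 h4 ⊢
  rw [h1, h4, Pi.add_apply, h2, h3]
  by_cases hx : x ∈ C <;> simp [Set.indicator, hx]

/-- For an eigenset, the eigenvalue times the area equals the total variation of the
indicator: `λ · |C| = J(χ_C)`. -/
theorem eigenset_eigenvalue_mul_area_eq_J
    {M : Type*} [MeasurableSpace M] (μ : Measure M) [IsFiniteMeasure μ]
    (J : Lp ℝ 2 μ → ℝ)
    (hhom : ∀ (α : ℝ) (u : Lp ℝ 2 μ), J (α • u) = |α| * J u)
    (htrans : ∀ (u : Lp ℝ 2 μ) (c : ℝ),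
      J (u + c • chi μ (MeasurableSet.univ : MeasurableSet (Set.univ : Set M))) = J u)
    {C : Set M} (hC : MeasurableSet C) (hCpos : 0 < μ C) (hCcpos : 0 < μ Cᶜ)
    (lam : ℝ)
    (heig : IsEigenset μ J hC lam ((μ C).toReal / (μ Cᶜ).toReal)) :
    lam * (μ C).toReal = J (chi μ hC) := by
  set a := (μ C).toReal with ha_def
  set b := (μ Cᶜ).toReal with hb_def
  have ha : 0 < a := ENNReal.toReal_pos hCpos.ne' (measure_ne_top μ C)
  have hb : 0 < b := ENNReal.toReal_pos hCcpos.ne' (measure_ne_top μ Cᶜ)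
  set β : ℝ := a / b with hβ_def
  have hβ : 0 < β := div_pos ha hb
  set ψ : Lp ℝ 2 μ := chi μ hC - β • chi μ hC.compl with hψ_def
  have hsub := heig.2
  have hJ0 : J 0 = 0 := by
    have := hhom 0 ψ; simpa using this
  have hA : J ψ = lam * ⟪ψ, ψ⟫ := by
    have h0 := hsub 0
    have h2 := hsub ((2:ℝ) • ψ)
    rw [hJ0] at h0
    have hJ2 : J ((2:ℝ) • ψ) = 2 * J ψ := by
      have := hhom 2 ψ; simpa using this
    rw [hJ2] at h2
    have e0 : ⟪lam • ψ, (0 : Lp ℝ 2 μ) - ψ⟫ = -(lam * ⟪ψ, ψ⟫) := by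
      rw [zero_sub, inner_neg_right, real_inner_smul_left]
    have e2 : ⟪lam • ψ, (2:ℝ) • ψ - ψ⟫ = lam * ⟪ψ, ψ⟫ := by
      have : (2 : ℝ) • ψ - ψ = ψ := by module
      rw [this, real_inner_smul_left]
    rw [e0] at h0; rw [e2] at h2
    linarith
  have hBB : ⟪ψ, ψ⟫ = a + β ^ 2 * b := by
    rw [hψ_def]
    rw [inner_sub_left, inner_sub_right, inner_sub_right, real_inner_smul_left,
      real_inner_smul_left, real_inner_smul_right, real_inner_smul_right,
      inner_chi_chi, inner_chi_chi, inner_chi_chi, inner_chi_chi]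
    rw [Set.inter_self, Set.inter_compl_self, Set.compl_inter_self, Set.inter_self]
    simp [← ha_def, ← hb_def]
    ring
  have hψ2 : ψ = (1 + β) • chi μ hC + (-β) • chi μ (MeasurableSet.univ : MeasurableSet (Set.univ : Set M)) := by
    rw [hψ_def, chi_univ_eq μ hC]; module
  have hJψ : J ψ = (1 + β) * J (chi μ hC) := by
    rw [hψ2, htrans ((1 + β) • chi μ hC) (-β), hhom, abs_of_pos (by linarith)]
  have hba : β * b = a := div_mul_cancel₀ a hb.ne'
  have key : lam * (a + β ^ 2 * b) = (1 + β) * J (chi μ hC) := by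
    rw [← hBB, ← hA, hJψ]
  have hexp : a + β ^ 2 * b = a * (1 + β) := by
    have : β ^ 2 * b = β * a := by rw [pow_two, mul_assoc, hba]
    rw [this]; ring
  rw [hexp] at key
  have h1β : (1 + β) ≠ 0 := by positivity
  have : (lam * a) * (1 + β) = J (chi μ hC) * (1 + β) := by linarith [key]
  exact mul_right_cancel₀ h1β this
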